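/- If H₁ ⊆ H₂ are subgroups of a group G, then H₁ ≈ H₂ (as subsets of G) if and only if the index of H₁ in H₂ is finite. -/

import Mathlib

open scoped Pointwise

def Bdd {G : Type*} [Group G] (A B : Set G) : Prop :=
  ∃ F : Finset G, A ⊆ (F : Set G) * B

def EquivBdd {G : Type*} [Group G] (A B : Set G) : Prop :=
  Bdd A B ∧ Bdd B A

theorem stmt2 {G : Type*} [Group G] (H₁ H₂ : Subgroup G) (h : H₁ ≤ H₂) :
    EquivBdd (H₁ : Set G) (H₂ : Set G) ↔ H₁.relIndex H₂ ≠ 0 := by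
  set H : Subgroup H₂ := H₁.subgroupOf H₂ with hH
  have hrel : H₁.relIndex H₂ = Nat.card (H₂ ⧸ H) := rfl
  constructor
  · rintro ⟨_, F, hF⟩
    rw [hrel, Nat.card_ne_zero]
    refine ⟨⟨QuotientGroup.mk 1⟩, ?_⟩
    -- surjection from subtype of F onto the quotient
    have : ∀ q : H₂ ⧸ H, ∃ f : {f : G // f ∈ F ∧ f ∈ H₂},
        QuotientGroup.mk (⟨f.1, f.2.2⟩ : H₂) = q := by
      intro q
      obtain ⟨x, rfl⟩ := QuotientGroup.mk_surjective q
      obtain ⟨f, hfF, b, hb, hfb⟩ := hF x.2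
      have hbH₁ : b ∈ H₁ := hb
      have hfH₂ : f ∈ H₂ := by
        have : f = (x : G) * b⁻¹ := by rw [← hfb]; group
        rw [this]; exact H₂.mul_mem x.2 (H₂.inv_mem (h hbH₁))
      refine ⟨⟨f, hfF, hfH₂⟩, ?_⟩
      apply QuotientGroup.eq.mpr
      simp only [hH, Subgroup.mem_subgroupOf]
      show ((⟨f, hfH₂⟩ : H₂)⁻¹ * x : H₂).1 ∈ H₁
      have : ((⟨f, hfH₂⟩ : H₂)⁻¹ * x : H₂).1 = f⁻¹ * x := rfl
      rw [this]
      have : f⁻¹ * (x : G) = b := by rw [← hfb]; group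
      rw [this]; exact hbH₁
    choose φ hφ using this
    haveI : Finite {f : G // f ∈ F ∧ f ∈ H₂} :=
      (F.finite_toSet.subset (fun x hx => hx.1 : {f : G | f ∈ F ∧ f ∈ H₂} ⊆ F)).to_subtype
    exact Finite.of_surjective (fun f : {f : G // f ∈ F ∧ f ∈ H₂} =>
      QuotientGroup.mk (⟨f.1, f.2.2⟩ : H₂)) (fun q => ⟨φ q, hφ q⟩)
  · intro hne
    rw [hrel, Nat.card_ne_zero] at hne
    obtain ⟨-, hfin⟩ := hne
    constructor
    · exact ⟨{1}, by intro x hx; exact ⟨1, by simp, x, h hx, by simp⟩⟩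
    · have hfin' : (Set.range fun q : H₂ ⧸ H => ((Quotient.out q : H₂) : G)).Finite :=
        Set.finite_range _
      refine ⟨hfin'.toFinset, ?_⟩
      intro x hx
      set q : H₂ ⧸ H := QuotientGroup.mk ⟨x, hx⟩ with hq
      set r : H₂ := Quotient.out q with hr
      have hout : QuotientGroup.mk r = q := Quotient.out_eq q
      have hmem : r⁻¹ * ⟨x, hx⟩ ∈ H := by
        have := QuotientGroup.eq.mp (hout.trans hq)
        exact this
      rw [hH, Subgroup.mem_subgroupOf] at hmem
      refine ⟨(r : G), by simpa [hfin'] using ⟨q, hr.symm⟩, (r⁻¹ * ⟨x, hx⟩ : H₂), hmem, ?_⟩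
      show (r : G) * ((r⁻¹ * ⟨x, hx⟩ : H₂) : G) = x
      push_cast
      group
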